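/- Let [F̲,F̄] be a p-box, B = [b₀,b₁] with F̲(b₁) > F̄(b₀), and h continuous, bounded and monotone non-decreasing, with F̄ continuous strictly increasing. Then the lower conditional expectation of h given B over Φ(F̲,F̄) equals (1/(F̲(b₁) − F̲(b₀))) · ( h(b₀)·(F̄(b₀) − F̲(b₀)) + ∫_{b₀}^{F̄⁻¹(F̲(b₁))} h dF̄ ). -/

import Mathlib

open Set Filter MeasureTheory
open scoped ENNReal

private lemma stj_bdd_integrable (G : StieltjesFunction ℝ) {f : ℝ → ℝ} (hf : Measurable f)
    {a b : ℝ} (M : ℝ) (hM : ∀ x ∈ Set.Ioc a b, |f x| ≤ M) :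
    IntegrableOn f (Set.Ioc a b) G.measure := by
  haveI : IsFiniteMeasure (G.measure.restrict (Set.Ioc a b)) :=
    ⟨by rw [Measure.restrict_apply_univ, G.measure_Ioc]; exact ENNReal.ofReal_lt_top⟩
  refine ⟨hf.aestronglyMeasurable, HasFiniteIntegral.of_bounded (C := M) ?_⟩
  exact ae_restrict_of_forall_mem measurableSet_Ioc
    (fun x hx => by simpa [Real.norm_eq_abs] using hM x hx)

private lemma sub_mono_integrable (G G' : StieltjesFunction ℝ) (c a b : ℝ) :
    IntegrableOn (fun t => c - G' t) (Set.Ioc a b) G.measure := by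
  refine stj_bdd_integrable G (measurable_const.sub G'.mono.measurable)
    (|c - G' a| + (G' b - G' a)) ?_
  intro t ht
  have h1 : G' a ≤ G' t := G'.mono ht.1.le
  have h2 : G' t ≤ G' b := G'.mono ht.2
  have h3 := neg_abs_le (c - G' a)
  have h4 := le_abs_self (c - G' a)
  simp only [Pi.sub_apply]; rw [abs_le]; constructor <;> linarith

private lemma stj_key (F H : StieltjesFunction ℝ) (hHc : Continuous H) {a b : ℝ} (hab : a ≤ b) :
    ∫ x in Set.Ioc a b, H x ∂F.measure
      = H a * (F b - F a) + ∫ t in Set.Ioc a b, (F b - F t) ∂H.measure := by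
  haveI : IsFiniteMeasure (F.measure.restrict (Set.Ioc a b)) :=
    ⟨by rw [Measure.restrict_apply_univ, F.measure_Ioc]; exact ENNReal.ofReal_lt_top⟩
  have hleft : ∀ x : ℝ, Function.leftLim H x = H x := fun x =>
    leftLim_eq_of_tendsto
      ((hHc.tendsto x).mono_left nhdsWithin_le_nhds)
  have L : ∫⁻ x in Set.Ioc a b, ENNReal.ofReal (H x - H a) ∂F.measure
      = ∫⁻ t in Set.Ioc a b, ENNReal.ofReal (F b - F t) ∂H.measure := by
    have e1 : ∀ x ∈ Set.Ioc a b,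
        ENNReal.ofReal (H x - H a)
          = ∫⁻ t in Set.Ioc a b, (Set.Ioo a x).indicator 1 t ∂H.measure := by
      intro x hx
      rw [lintegral_indicator_one measurableSet_Ioo, Measure.restrict_apply measurableSet_Ioo,
        Set.inter_eq_self_of_subset_left (Set.Ioo_subset_Ioc_self.trans
          (Set.Ioc_subset_Ioc_right hx.2)),
        StieltjesFunction.measure_Ioo, hleft]
    calc ∫⁻ x in Set.Ioc a b, ENNReal.ofReal (H x - H a) ∂F.measure
        = ∫⁻ x in Set.Ioc a b, ∫⁻ t in Set.Ioc a b,
            (Set.Ioo a x).indicator 1 t ∂H.measure ∂F.measure :=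
          setLIntegral_congr_fun measurableSet_Ioc e1
      _ = ∫⁻ t in Set.Ioc a b, ∫⁻ x in Set.Ioc a b,
            (Set.Ioo a x).indicator 1 t ∂F.measure ∂H.measure := by
          apply lintegral_lintegral_swap
          have hset : MeasurableSet {p : ℝ × ℝ | a < p.2 ∧ p.2 < p.1} :=
            (measurableSet_lt measurable_const measurable_snd).inter
              (measurableSet_lt measurable_snd measurable_fst)
          have heq : (Function.uncurry fun (x t : ℝ) =>
                (Set.Ioo a x).indicator (1 : ℝ → ℝ≥0∞) t)
              = Set.indicator {p : ℝ × ℝ | a < p.2 ∧ p.2 < p.1} (1 : ℝ × ℝ → ℝ≥0∞) := by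
            funext p
            rcases p with ⟨x, t⟩
            simp only [Function.uncurry, Set.indicator_apply, Set.mem_Ioo, Set.mem_setOf_eq]
            split <;> rfl
          rw [heq]
          exact (measurable_one.indicator hset).aemeasurable
      _ = ∫⁻ t in Set.Ioc a b, ENNReal.ofReal (F b - F t) ∂H.measure := by
          apply setLIntegral_congr_fun measurableSet_Ioc ?_
          intro t ht
          have e2 : ∀ x : ℝ, (Set.Ioo a x).indicator (1 : ℝ → ℝ≥0∞) t
              = (Set.Ioi t).indicator 1 x := by
            intro x
            simp only [Set.indicator_apply, Set.mem_Ioo, Set.mem_Ioi]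
            by_cases hx : t < x
            · rw [if_pos ⟨ht.1, hx⟩, if_pos hx]; rfl
            · rw [if_neg (fun hc => hx hc.2), if_neg hx]
          simp only [e2]
          rw [lintegral_indicator_one measurableSet_Ioi,
            Measure.restrict_apply measurableSet_Ioi]
          have : Set.Ioi t ∩ Set.Ioc a b = Set.Ioc t b := by
            ext y
            simp only [Set.mem_inter_iff, Set.mem_Ioi, Set.mem_Ioc]
            exact ⟨fun ⟨h1, _, h3⟩ => ⟨h1, h3⟩, fun ⟨h1, h2⟩ => ⟨h1, ht.1.trans h1, h2⟩⟩
          rw [this, F.measure_Ioc]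
  have hFab : F a ≤ F b := F.mono hab
  have hint : IntegrableOn (fun x => H x) (Set.Ioc a b) F.measure := by
    have h0 := (sub_mono_integrable F H 0 a b).neg
    have e : (fun x => (H x : ℝ)) = fun x => -(0 - H x) := by funext x; ring
    rw [e]; exact h0
  have h1 : ∫ x in Set.Ioc a b, H x ∂F.measure
      = H a * (F b - F a) + ∫ x in Set.Ioc a b, (H x - H a) ∂F.measure := by
    have e : ∫ x in Set.Ioc a b, (H x - H a) ∂F.measure
        = (∫ x in Set.Ioc a b, H x ∂F.measure) - ∫ _x in Set.Ioc a b, (H a : ℝ) ∂F.measure :=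
      integral_sub hint (integrable_const _)
    rw [e, setIntegral_const, measureReal_def, F.measure_Ioc, ENNReal.toReal_ofReal (by linarith), smul_eq_mul]
    ring
  have h2 : ∫ x in Set.Ioc a b, (H x - H a) ∂F.measure
      = (∫⁻ x in Set.Ioc a b, ENNReal.ofReal (H x - H a) ∂F.measure).toReal := by
    rw [integral_eq_lintegral_of_nonneg_ae]
    · exact ae_restrict_of_forall_mem measurableSet_Ioc fun x hx =>
        sub_nonneg.2 (H.mono hx.1.le)
    · exact (hHc.sub continuous_const).aestronglyMeasurable
  have h3 : ∫ t in Set.Ioc a b, (F b - F t) ∂H.measure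
      = (∫⁻ t in Set.Ioc a b, ENNReal.ofReal (F b - F t) ∂H.measure).toReal := by
    rw [integral_eq_lintegral_of_nonneg_ae]
    · exact ae_restrict_of_forall_mem measurableSet_Ioc fun t ht => sub_nonneg.2 (F.mono ht.2)
    · exact (measurable_const.sub F.mono.measurable).aestronglyMeasurable
  rw [h1, h2, L, ← h3]

private noncomputable def stGc (Fl Fu : StieltjesFunction ℝ)
    (hFuc : Continuous Fu) (c m : ℝ) : StieltjesFunction ℝ where
  toFun x := if x < c then Fl x else max (Fl x) (min (Fu x) m)
  mono' := by
    intro x y hxy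
    dsimp only
    by_cases hx : x < c <;> by_cases hy : y < c
    · simpa [hx, hy] using Fl.mono hxy
    · rw [if_pos hx, if_neg hy]; exact (Fl.mono hxy).trans (le_max_left _ _)
    · exact absurd (lt_of_le_of_lt hxy hy) hx
    · rw [if_neg hx, if_neg hy]
      exact max_le_max (Fl.mono hxy) (min_le_min (Fu.mono hxy) le_rfl)
  right_continuous' := by
    intro x
    by_cases hx : x < c
    · have hev : ∀ᶠ y in nhds x,
          (if y < c then Fl y else max (Fl y) (min (Fu y) m)) = Fl y := by
        filter_upwards [eventually_lt_nhds hx] with y hy using if_pos hy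
      exact (Fl.right_continuous x).congr_of_eventuallyEq
        (hev.filter_mono nhdsWithin_le_nhds) (if_pos hx)
    · have hcx : c ≤ x := not_lt.1 hx
      have base : ContinuousWithinAt (fun y => max (Fl y) (min (Fu y) m)) (Set.Ici x) x :=
        (Fl.right_continuous x).max
          ((hFuc.continuousAt.continuousWithinAt).min continuousWithinAt_const)
      apply base.congr
      · intro y hy
        rw [if_neg (not_lt.2 (hcx.trans hy))]
      · rw [if_neg hx]

/-- Closed form for the lower conditional expectation of a
monotone non-decreasing `h` given `B = [b₀,b₁]`. -/
theorem lower_conditional_expectation_monotone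
    (Fl Fu : StieltjesFunction ℝ)
    (hFl : Tendsto Fl atBot (nhds 0) ∧ Tendsto Fl atTop (nhds 1))
    (hFu : Tendsto Fu atBot (nhds 0) ∧ Tendsto Fu atTop (nhds 1))
    (hle : ∀ x, Fl x ≤ Fu x)
    (hFuc : Continuous Fu) (hFusm : StrictMono Fu)
    (b₀ b₁ : ℝ) (hb : b₀ ≤ b₁) (hpos : Fu b₀ < Fl b₁)
    (h : ℝ → ℝ) (hcont : Continuous h) (C : ℝ) (hbd : ∀ x, |h x| ≤ C)
    (hmono : Monotone h)
    (Φ : Set (StieltjesFunction ℝ))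
    (hΦ : Φ = {F : StieltjesFunction ℝ |
        (Tendsto F atBot (nhds 0) ∧ Tendsto F atTop (nhds 1)) ∧
          ∀ x, Fl x ≤ F x ∧ F x ≤ Fu x}) :
    sInf ((fun F : StieltjesFunction ℝ =>
        (∫ x in Ioc b₀ b₁, h x ∂F.measure) / (F b₁ - F b₀)) '' Φ)
      = (Fl b₁ - Fl b₀)⁻¹ *
        (h b₀ * (Fu b₀ - Fl b₀)
          + ∫ x in Ioc b₀ (sInf {x : ℝ | Fl b₁ ≤ Fu x}), h x ∂Fu.measure) := by
  obtain ⟨hFl0, hFl1⟩ := hFl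
  obtain ⟨hFu0, hFu1⟩ := hFu
  set H : StieltjesFunction ℝ := ⟨h, hmono, fun _ => hcont.continuousAt.continuousWithinAt⟩
    with hHdef
  have hHfun : (H : ℝ → ℝ) = h := rfl
  have hHc : Continuous H := hcont
  have hb01 : Fl b₀ ≤ Fu b₀ := hle b₀
  -- β
  obtain ⟨β, hβmem, hβeq⟩ : ∃ β ∈ Set.Icc b₀ (b₁ + 1), Fu β = Fl b₁ := by
    have h2 : Fu b₁ < Fu (b₁ + 1) := hFusm (by linarith)
    have h1 : Fl b₁ ≤ Fu b₁ := hle b₁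
    exact intermediate_value_Icc (by linarith) hFuc.continuousOn ⟨hpos.le, by linarith⟩
  have hβle : β ≤ b₁ := by
    by_contra hc
    push_neg at hc
    have := hFusm hc
    rw [hβeq] at this
    exact absurd (hle b₁) (not_le.2 this)
  have hβgt : b₀ < β := by
    rcases lt_or_ge b₀ β with hx | hx
    · exact hx
    · have := Fu.mono hx
      rw [hβeq] at this
      linarith
  have hsInfβ : sInf {x : ℝ | Fl b₁ ≤ Fu x} = β := by
    have hset : {x : ℝ | Fl b₁ ≤ Fu x} = Set.Ici β := by
      ext x
      simp only [Set.mem_setOf_eq, Set.mem_Ici, ← hβeq, hFusm.le_iff_le]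
    rw [hset, csInf_Ici]
  rw [hsInfβ]
  have hDspos : 0 < Fl b₁ - Fl b₀ := by linarith
  have hKnonneg : 0 ≤ ∫ t in Set.Ioc b₀ β, (Fl b₁ - Fu t) ∂H.measure := by
    apply setIntegral_nonneg measurableSet_Ioc
    intro t ht
    rw [← hβeq]
    exact sub_nonneg.2 (Fu.mono ht.2)
  have hnum : h b₀ * (Fu b₀ - Fl b₀) + (∫ x in Set.Ioc b₀ β, h x ∂Fu.measure)
      = h b₀ * (Fl b₁ - Fl b₀) + ∫ t in Set.Ioc b₀ β, (Fl b₁ - Fu t) ∂H.measure := by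
    have hk := stj_key Fu H hHc hβgt.le
    rw [hHfun] at hk
    rw [hk, hβeq]
    ring
  rw [hnum]
  -- lower bound
  have hlb : ∀ v ∈ ((fun F : StieltjesFunction ℝ =>
      (∫ x in Set.Ioc b₀ b₁, h x ∂F.measure) / (F b₁ - F b₀)) '' Φ),
      (Fl b₁ - Fl b₀)⁻¹ * (h b₀ * (Fl b₁ - Fl b₀)
        + ∫ t in Set.Ioc b₀ β, (Fl b₁ - Fu t) ∂H.measure) ≤ v := by
    rintro v ⟨F, hFmem, rfl⟩
    dsimp only
    rw [hΦ] at hFmem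
    obtain ⟨-, hFb⟩ := hFmem
    have hD : 0 < F b₁ - F b₀ := by
      have h1 := (hFb b₁).1
      have h2 := (hFb b₀).2
      linarith
    have hkF := stj_key F H hHc hb
    rw [hHfun] at hkF
    have hIJ : ∫ t in Set.Ioc b₀ β, (F b₁ - F t) ∂H.measure
        ≤ ∫ t in Set.Ioc b₀ b₁, (F b₁ - F t) ∂H.measure := by
      apply setIntegral_mono_set (sub_mono_integrable H F (F b₁) b₀ b₁)
      · exact ae_restrict_of_forall_mem measurableSet_Ioc fun t ht =>
          sub_nonneg.2 (F.mono ht.2)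
      · exact HasSubset.Subset.eventuallyLE (Set.Ioc_subset_Ioc_right hβle)
    have hs1 : ∀ t ∈ Set.Ioc b₀ β,
        (Fl b₁ - Fu t) * (F b₁ - F b₀) ≤ (F b₁ - F t) * (Fl b₁ - Fl b₀) := by
      intro t ht
      have h1 : F t ≤ Fu t := (hFb t).2
      have h2 : Fl b₀ ≤ F b₀ := (hFb b₀).1
      have h3 : F b₀ ≤ Fu b₀ := (hFb b₀).2
      have h4 : Fl b₁ ≤ F b₁ := (hFb b₁).1
      have h5 : Fu b₀ ≤ Fu t := Fu.mono ht.1.le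
      have h6 : Fu t ≤ Fl b₁ := by rw [← hβeq]; exact Fu.mono ht.2
      nlinarith [mul_nonneg (sub_nonneg.2 h4) (sub_nonneg.2 (h3.trans h5)),
        mul_nonneg (sub_nonneg.2 (h6.trans h4)) (sub_nonneg.2 h2),
        mul_nonneg (sub_nonneg.2 h1) hDspos.le]
    have hKD : (∫ t in Set.Ioc b₀ β, (Fl b₁ - Fu t) ∂H.measure) * (F b₁ - F b₀)
        ≤ (∫ t in Set.Ioc b₀ b₁, (F b₁ - F t) ∂H.measure) * (Fl b₁ - Fl b₀) := by
      calc (∫ t in Set.Ioc b₀ β, (Fl b₁ - Fu t) ∂H.measure) * (F b₁ - F b₀)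
          = ∫ t in Set.Ioc b₀ β, (Fl b₁ - Fu t) * (F b₁ - F b₀) ∂H.measure :=
            (integral_mul_const _ _).symm
        _ ≤ ∫ t in Set.Ioc b₀ β, (F b₁ - F t) * (Fl b₁ - Fl b₀) ∂H.measure :=
            setIntegral_mono_on
              ((sub_mono_integrable H Fu (Fl b₁) b₀ β).mul_const _)
              ((sub_mono_integrable H F (F b₁) b₀ β).mul_const _)
              measurableSet_Ioc hs1
        _ = (∫ t in Set.Ioc b₀ β, (F b₁ - F t) ∂H.measure) * (Fl b₁ - Fl b₀) :=
            integral_mul_const _ _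
        _ ≤ (∫ t in Set.Ioc b₀ b₁, (F b₁ - F t) ∂H.measure) * (Fl b₁ - Fl b₀) :=
            mul_le_mul_of_nonneg_right hIJ hDspos.le
    rw [hkF, le_div_iff₀ hD, inv_mul_eq_div, div_mul_eq_mul_div, div_le_iff₀ hDspos]
    nlinarith [hKD]
  have hbdd : BddBelow ((fun F : StieltjesFunction ℝ =>
      (∫ x in Set.Ioc b₀ b₁, h x ∂F.measure) / (F b₁ - F b₀)) '' Φ) := ⟨_, hlb⟩
  have hFuΦ : Fu ∈ Φ := by
    rw [hΦ]
    exact ⟨⟨hFu0, hFu1⟩, fun x => ⟨hle x, le_rfl⟩⟩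
  -- upper bound
  have hub : ∀ ε : ℝ, 0 < ε →
      sInf ((fun F : StieltjesFunction ℝ =>
        (∫ x in Set.Ioc b₀ b₁, h x ∂F.measure) / (F b₁ - F b₀)) '' Φ)
      ≤ (Fl b₁ - Fl b₀)⁻¹ * (h b₀ * (Fl b₁ - Fl b₀)
          + ∫ t in Set.Ioc b₀ β, (Fl b₁ - Fu t) ∂H.measure) + ε := by
    intro ε hε
    obtain ⟨δ, hδpos, hδ⟩ := Metric.continuousAt_iff.1 (hcont.continuousAt (x := b₀)) ε hε
    set c := min (b₀ + δ / 2) β with hcdef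
    have hcb0 : b₀ < c := lt_min (by linarith) hβgt
    have hcβ : c ≤ β := min_le_right _ _
    have hcb1 : c ≤ b₁ := hcβ.trans hβle
    have hhc : h c - h b₀ ≤ ε := by
      have hd : dist c b₀ < δ := by
        rw [Real.dist_eq, abs_of_pos (sub_pos.2 hcb0)]
        have : c ≤ b₀ + δ / 2 := min_le_left _ _
        linarith
      have := hδ hd
      rw [Real.dist_eq] at this
      have := le_abs_self (h c - h b₀)
      linarith
    set G := stGc Fl Fu hFuc c (Fl b₁) with hGdef
    have hGfun : ∀ x, G x = if x < c then Fl x else max (Fl x) (min (Fu x) (Fl b₁)) :=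
      fun _ => rfl
    have hlo : ∀ x, Fl x ≤ G x := by
      intro x
      rw [hGfun]
      split
      · exact le_rfl
      · exact le_max_left _ _
    have hup : ∀ x, G x ≤ Fu x := by
      intro x
      rw [hGfun]
      split
      · exact hle x
      · exact max_le (hle x) (min_le_left _ _)
    have hGb0 : G b₀ = Fl b₀ := by rw [hGfun, if_pos hcb0]
    have hGb1 : G b₁ = Fl b₁ := by
      rw [hGfun, if_neg (not_lt.2 hcb1), min_eq_right (hle b₁), max_self]
    have hGmem : G ∈ Φ := by
      rw [hΦ]
      refine ⟨⟨?_, ?_⟩, fun x => ⟨hlo x, hup x⟩⟩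
      · apply hFl0.congr'
        filter_upwards [eventually_lt_atBot c] with x hx
        exact ((hGfun x).trans (if_pos hx)).symm
      · exact tendsto_of_tendsto_of_tendsto_of_le_of_le hFl1 hFu1 hlo hup
    have hkG := stj_key G H hHc hb
    rw [hHfun, hGb0, hGb1] at hkG
    -- bound the residual integral
    have hmeas : (H.measure (Set.Ioc b₀ c)).toReal = h c - h b₀ := by
      rw [H.measure_Ioc]
      exact ENNReal.toReal_ofReal (sub_nonneg.2 (hmono hcb0.le))
    have hA : ∫ t in Set.Ioc b₀ c, (Fl b₁ - G t) ∂H.measure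
        ≤ (h c - h b₀) * (Fl b₁ - Fl b₀) := by
      calc ∫ t in Set.Ioc b₀ c, (Fl b₁ - G t) ∂H.measure
          ≤ ∫ _t in Set.Ioc b₀ c, (Fl b₁ - Fl b₀) ∂H.measure := by
            apply setIntegral_mono_on (sub_mono_integrable H G (Fl b₁) b₀ c)
              (integrableOn_const (by rw [H.measure_Ioc]; exact ENNReal.ofReal_ne_top))
              measurableSet_Ioc
            intro t ht
            have h1 := hlo t
            have h2 : Fl b₀ ≤ Fl t := Fl.mono ht.1.le
            linarith
        _ = (h c - h b₀) * (Fl b₁ - Fl b₀) := by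
            rw [setIntegral_const, measureReal_def, hmeas, smul_eq_mul]
    have hmax_int : ∀ a' b' : ℝ, IntegrableOn (fun t => max (Fl b₁ - Fu t) 0)
        (Set.Ioc a' b') H.measure := by
      intro a' b'
      have := (sub_mono_integrable H Fu (Fl b₁) a' b').pos_part
      exact this
    have hB : ∫ t in Set.Ioc c b₁, (Fl b₁ - G t) ∂H.measure
        ≤ ∫ t in Set.Ioc b₀ β, (Fl b₁ - Fu t) ∂H.measure := by
      calc ∫ t in Set.Ioc c b₁, (Fl b₁ - G t) ∂H.measure
          ≤ ∫ t in Set.Ioc c b₁, max (Fl b₁ - Fu t) 0 ∂H.measure := by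
            apply setIntegral_mono_on (sub_mono_integrable H G (Fl b₁) c b₁)
              (hmax_int c b₁) measurableSet_Ioc
            intro t ht
            have hGt : min (Fu t) (Fl b₁) ≤ G t := by
              rw [hGfun, if_neg (not_lt.2 ht.1.le)]
              exact le_max_right _ _
            rcases le_total (Fu t) (Fl b₁) with hc1 | hc1
            · rw [min_eq_left hc1] at hGt
              exact le_trans (by linarith) (le_max_left _ _)
            · rw [min_eq_right hc1] at hGt
              exact le_trans (by linarith) (le_max_right _ _)
        _ ≤ ∫ t in Set.Ioc b₀ b₁, max (Fl b₁ - Fu t) 0 ∂H.measure := by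
            apply setIntegral_mono_set (hmax_int b₀ b₁)
              (ae_of_all _ fun t => le_max_right _ _)
              (HasSubset.Subset.eventuallyLE (Set.Ioc_subset_Ioc_left hcb0.le))
        _ = (∫ t in Set.Ioc b₀ β, max (Fl b₁ - Fu t) 0 ∂H.measure)
            + ∫ t in Set.Ioc β b₁, max (Fl b₁ - Fu t) 0 ∂H.measure := by
            rw [← setIntegral_union (Set.Ioc_disjoint_Ioc_of_le le_rfl) measurableSet_Ioc
              (hmax_int b₀ β) (hmax_int β b₁), Set.Ioc_union_Ioc_eq_Ioc hβgt.le hβle]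
        _ = ∫ t in Set.Ioc b₀ β, (Fl b₁ - Fu t) ∂H.measure := by
            have e1 : ∫ t in Set.Ioc b₀ β, max (Fl b₁ - Fu t) 0 ∂H.measure
                = ∫ t in Set.Ioc b₀ β, (Fl b₁ - Fu t) ∂H.measure := by
              apply setIntegral_congr_fun measurableSet_Ioc
              intro t ht
              have : Fu t ≤ Fl b₁ := by rw [← hβeq]; exact Fu.mono ht.2
              exact max_eq_left (by linarith)
            have e2 : ∫ t in Set.Ioc β b₁, max (Fl b₁ - Fu t) 0 ∂H.measure = 0 := by
              have heq0 : Set.EqOn (fun t => max (Fl b₁ - Fu t) 0) (fun _ => (0 : ℝ))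
                  (Set.Ioc β b₁) := by
                intro t ht
                have hge : Fl b₁ ≤ Fu t := by rw [← hβeq]; exact Fu.mono ht.1.le
                show max (Fl b₁ - Fu t) 0 = 0
                exact max_eq_right (by linarith)
              rw [setIntegral_congr_fun measurableSet_Ioc heq0, integral_zero]
            rw [e1, e2, add_zero]
    have hT : ∫ t in Set.Ioc b₀ b₁, (Fl b₁ - G t) ∂H.measure
        ≤ (h c - h b₀) * (Fl b₁ - Fl b₀)
          + ∫ t in Set.Ioc b₀ β, (Fl b₁ - Fu t) ∂H.measure := by
      rw [← Set.Ioc_union_Ioc_eq_Ioc hcb0.le hcb1,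
        setIntegral_union (Set.Ioc_disjoint_Ioc_of_le le_rfl) measurableSet_Ioc
          (sub_mono_integrable H G (Fl b₁) b₀ c) (sub_mono_integrable H G (Fl b₁) c b₁)]
      exact add_le_add hA hB
    have hval : (∫ x in Set.Ioc b₀ b₁, h x ∂G.measure) / (G b₁ - G b₀)
        ≤ (Fl b₁ - Fl b₀)⁻¹ * (h b₀ * (Fl b₁ - Fl b₀)
          + ∫ t in Set.Ioc b₀ β, (Fl b₁ - Fu t) ∂H.measure) + ε := by
      rw [hGb1, hGb0, hkG, div_le_iff₀ hDspos, add_mul, inv_mul_eq_div,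
        div_mul_cancel₀ _ hDspos.ne']
      have := mul_le_mul_of_nonneg_right hhc hDspos.le
      linarith
    exact le_trans (csInf_le hbdd ⟨G, hGmem, rfl⟩) hval
  -- combine
  apply le_antisymm
  · by_contra hcon
    push_neg at hcon
    set R := (Fl b₁ - Fl b₀)⁻¹ * (h b₀ * (Fl b₁ - Fl b₀)
      + ∫ t in Set.Ioc b₀ β, (Fl b₁ - Fu t) ∂H.measure) with hRdef
    have := hub ((sInf ((fun F : StieltjesFunction ℝ =>
        (∫ x in Set.Ioc b₀ b₁, h x ∂F.measure) / (F b₁ - F b₀)) '' Φ) - R) / 2)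
      (by linarith)
    linarith
  · exact le_csInf ⟨_, Set.mem_image_of_mem _ hFuΦ⟩ hlb
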